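/- arXiv:2310.06371 — 2 statements merged into one kernel-verified Lean document; each statement's English description precedes it below -/
import Mathlib

section
/- The Gaussian mechanism M(D) = f(D) + σ·Δ(f)·N(0, I), which adds i.i.d. Gaussian noise with standard deviation σ·Δ(f) to each coordinate of f(D), satisfies (1/(2σ²))-zCDP. -/
open MeasureTheory ProbabilityTheory

/-- Rényi divergence of order `α` between two measures. -/
noncomputable def renyiDiv {Ω : Type*} [MeasurableSpace Ω] (α : ℝ) (μ ν : Measure Ω) : ℝ :=
  (α - 1)⁻¹ * Real.log (∫ x, ((μ.rnDeriv ν x).toReal) ^ α ∂ν)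

/-- `ρ`-zCDP. -/
def zCDP {D Ω : Type*} [MeasurableSpace Ω] (neighbor : D → D → Prop)
    (M : D → Measure Ω) (ρ : ℝ) : Prop :=
  ∀ d d' : D, neighbor d d' → ∀ α : ℝ, 1 < α → renyiDiv α (M d) (M d') ≤ ρ * α

open scoped ENNReal NNReal Real

private lemma lintegral_pi_prod : ∀ {n : ℕ} (μ : Fin n → Measure ℝ) [∀ i, SigmaFinite (μ i)]
    (g : Fin n → ℝ → ℝ≥0∞), (∀ i, Measurable (g i)) →
    ∫⁻ x : Fin n → ℝ, ∏ i, g i (x i) ∂Measure.pi μ = ∏ i, ∫⁻ t, g i t ∂μ i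
  | 0, μ, _, g, _ => by simp
  | (n+1), μ, _, g, hg => by
    have hF : Measurable fun x : Fin (n+1) → ℝ => ∏ i, g i (x i) :=
      Finset.measurable_prod _ fun i _ => (hg i).comp (measurable_pi_apply i)
    rw [← ((measurePreserving_piFinSuccAbove μ 0).symm _).lintegral_comp hF]
    simp_rw [MeasurableEquiv.piFinSuccAbove_symm_apply, Fin.insertNthEquiv, Fin.insertNth_zero,
      Equiv.coe_fn_mk, Fin.prod_univ_succ, Fin.cons_zero, Fin.cons_succ, Fin.zero_succAbove,
      cast_eq]
    refine Eq.trans (lintegral_prod_mul ((hg 0).aemeasurable)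
      ((Finset.measurable_prod _ fun (i : Fin n) _ =>
        (hg i.succ).comp (measurable_pi_apply i)).aemeasurable)) ?_
    simp only [Function.comp]
    rw [lintegral_pi_prod (fun i => μ i.succ) (fun i => g i.succ) (fun i => hg i.succ)]

private lemma pi_withDensity_eq {n : ℕ} (ν μ : Fin n → Measure ℝ) [∀ i, SigmaFinite (ν i)]
    [∀ i, SigmaFinite (μ i)] (g : Fin n → ℝ → ℝ≥0∞) (hg : ∀ i, Measurable (g i))
    (hμν : ∀ i, μ i = (ν i).withDensity (g i)) :
    Measure.pi μ = (Measure.pi ν).withDensity fun x => ∏ i, g i (x i) := by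
  refine Measure.pi_eq fun s hs => ?_
  rw [withDensity_apply _ (MeasurableSet.univ_pi hs),
    ← lintegral_indicator (MeasurableSet.univ_pi hs)]
  have hind : ∀ x : Fin n → ℝ,
      (Set.pi Set.univ s).indicator (fun x => ∏ i, g i (x i)) x
        = ∏ i, (s i).indicator (g i) (x i) := by
    intro x
    by_cases hx : x ∈ Set.pi Set.univ s
    · rw [Set.indicator_of_mem hx]
      exact Finset.prod_congr rfl fun i _ =>
        (Set.indicator_of_mem (hx i (Set.mem_univ i)) _).symm
    · rw [Set.indicator_of_notMem hx]
      rw [Set.mem_univ_pi] at hx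
      push_neg at hx
      obtain ⟨i, hi⟩ := hx
      exact (Finset.prod_eq_zero (Finset.mem_univ i)
        (Set.indicator_of_notMem hi _)).symm
  simp_rw [hind]
  rw [lintegral_pi_prod ν _ (fun i => (hg i).indicator (hs i))]
  exact Finset.prod_congr rfl fun i _ => by
    rw [lintegral_indicator (hs i), hμν i, withDensity_apply _ (hs i)]

private lemma gaussian_withDensity (m m' : ℝ) {v : ℝ≥0} (hv : v ≠ 0) :
    gaussianReal m v = (gaussianReal m' v).withDensity
      fun x => ENNReal.ofReal (gaussianPDFReal m v x / gaussianPDFReal m' v x) := by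
  rw [gaussianReal_of_var_ne_zero _ hv, gaussianReal_of_var_ne_zero _ hv,
    ← withDensity_mul _ (measurable_gaussianPDF _ _)
      (show Measurable fun x => ENNReal.ofReal (gaussianPDFReal m v x / gaussianPDFReal m' v x) from
        ((measurable_gaussianPDFReal _ _).div (measurable_gaussianPDFReal _ _)).ennreal_ofReal)]
  congr 1
  ext x
  rw [Pi.mul_apply, gaussianPDF, gaussianPDF,
    ← ENNReal.ofReal_mul (gaussianPDFReal_nonneg _ _ _)]
  congr 1
  rw [mul_comm, div_mul_cancel₀ _ (gaussianPDFReal_pos m' v x hv).ne']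

open Real in
private lemma key_pointwise (m m' : ℝ) {v : ℝ≥0} (hv : 0 < (v:ℝ)) (α : ℝ) (x : ℝ) :
    gaussianPDFReal m' v x * ((gaussianPDFReal m v x / gaussianPDFReal m' v x) ^ α)
      = Real.exp (α * (α - 1) * (m - m') ^ 2 / (2 * v))
        * gaussianPDFReal (α * m + (1 - α) * m') v x := by
  have hc : (0:ℝ) < (√(2 * π * v))⁻¹ := by
    have : (0:ℝ) < 2 * π * v := by positivity
    positivity
  simp only [gaussianPDFReal]
  rw [mul_div_mul_left _ _ hc.ne', ← Real.exp_sub, ← Real.exp_mul, mul_assoc, ← Real.exp_add]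
  rw [show -(x - m') ^ 2 / (2 * v) + (-(x - m) ^ 2 / (2 * v) - -(x - m') ^ 2 / (2 * v)) * α
      = α * (α - 1) * (m - m') ^ 2 / (2 * v)
        + -(x - (α * m + (1 - α) * m')) ^ 2 / (2 * v) by
    field_simp
    ring]
  rw [Real.exp_add]
  ring

open Real in
private lemma lintegral_ratio_rpow (m m' : ℝ) {v : ℝ≥0} (hv : v ≠ 0) (α : ℝ) :
    ∫⁻ x, ENNReal.ofReal ((gaussianPDFReal m v x / gaussianPDFReal m' v x) ^ α)
        ∂(gaussianReal m' v)
      = ENNReal.ofReal (Real.exp (α * (α - 1) * (m - m') ^ 2 / (2 * v))) := by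
  have hV : (0:ℝ) < v := by positivity
  have hr : Measurable fun x =>
      ENNReal.ofReal ((gaussianPDFReal m v x / gaussianPDFReal m' v x) ^ α) := by
    have h1 : Measurable fun x => gaussianPDFReal m v x / gaussianPDFReal m' v x :=
      (measurable_gaussianPDFReal _ _).div (measurable_gaussianPDFReal _ _)
    measurability
  rw [gaussianReal_of_var_ne_zero _ hv,
    lintegral_withDensity_eq_lintegral_mul _ (measurable_gaussianPDF _ _) hr]
  simp only [Pi.mul_apply, gaussianPDF]
  calc ∫⁻ x, ENNReal.ofReal (gaussianPDFReal m' v x)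
        * ENNReal.ofReal ((gaussianPDFReal m v x / gaussianPDFReal m' v x) ^ α) ∂volume
      = ∫⁻ x, ENNReal.ofReal (Real.exp (α * (α - 1) * (m - m') ^ 2 / (2 * v)))
          * ENNReal.ofReal (gaussianPDFReal (α * m + (1 - α) * m') v x) ∂volume := by
        congr 1
        ext x
        rw [← ENNReal.ofReal_mul (gaussianPDFReal_nonneg _ _ _), key_pointwise m m' hV α x,
          ENNReal.ofReal_mul (Real.exp_pos _).le]
    _ = ENNReal.ofReal (Real.exp (α * (α - 1) * (m - m') ^ 2 / (2 * v))) := by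
        rw [lintegral_const_mul _ (measurable_gaussianPDFReal _ v).ennreal_ofReal,
          lintegral_gaussianPDFReal_eq_one _ hv, mul_one]

set_option maxHeartbeats 1000000 in
/-- The Gaussian mechanism `M(D) = f(D) + σ·Δ·N(0, I)`, adding i.i.d. Gaussian noise of
standard deviation `σ·Δ(f)` to each of the `h` coordinates of `f(D)`, where `Δ` bounds the
ℓ2-sensitivity of `f`, satisfies `(1/(2σ²))`-zCDP. -/
theorem gaussianMechanism_zCDP
    {D : Type*} (neighbor : D → D → Prop)
    (h : ℕ) (f : D → Fin h → ℝ) (Δ σ : ℝ) (hΔ : 0 ≤ Δ) (hσ : 0 < σ)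
    (hsens : ∀ d d' : D, neighbor d d' →
      Real.sqrt (∑ i, (f d i - f d' i) ^ 2) ≤ Δ)
    (M : D → Measure (Fin h → ℝ))
    (hM : ∀ d, M d = Measure.pi (fun i => gaussianReal (f d i) (((σ * Δ) ^ 2).toNNReal))) :
    zCDP neighbor M (1 / (2 * σ ^ 2)) := by
  intro d d' hnb α hα
  have hα1 : α - 1 ≠ 0 := sub_ne_zero.mpr hα.ne'
  have hα0 : (0:ℝ) < α := lt_trans one_pos hα
  have hSnn : (0:ℝ) ≤ ∑ j, (f d j - f d' j) ^ 2 :=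
    Finset.sum_nonneg fun j _ => sq_nonneg _
  by_cases hΔ0 : Δ = 0
  · -- degenerate case: the two means coincide, hence the two measures are equal
    have hsum : ∑ j, (f d j - f d' j) ^ 2 = 0 := by
      have h1 := hsens d d' hnb
      rw [hΔ0] at h1
      nlinarith [Real.sq_sqrt hSnn, Real.sqrt_nonneg (∑ j, (f d j - f d' j) ^ 2)]
    have hfd : f d = f d' := by
      funext i
      have h3 := (Finset.sum_eq_zero_iff_of_nonneg
        (fun j _ => sq_nonneg (f d j - f d' j))).mp hsum i (Finset.mem_univ i)
      nlinarith [sq_nonneg (f d i - f d' i)]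
    have hMM : M d = M d' := by rw [hM d, hM d', hfd]
    have hprob : IsProbabilityMeasure (M d') := by rw [hM d']; infer_instance
    rw [renyiDiv, hMM]
    have hae : (fun x => (((M d').rnDeriv (M d') x).toReal) ^ α) =ᵐ[M d'] fun _ => (1:ℝ) :=
      (Measure.rnDeriv_self (M d')).mono fun x hx => by
        simp only [hx]; simp [Real.one_rpow]
    rw [integral_congr_ae hae, integral_const, probReal_univ]
    simp only [ENNReal.toReal_one, one_smul, Real.log_one, mul_zero]
    positivity
  · -- main case
    have hΔp : 0 < Δ := lt_of_le_of_ne hΔ (Ne.symm hΔ0)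
    set v : ℝ≥0 := ((σ * Δ) ^ 2).toNNReal with hvdef
    have hvR : (v:ℝ) = (σ * Δ) ^ 2 := Real.coe_toNNReal _ (sq_nonneg _)
    have hvpos : (0:ℝ) < (v:ℝ) := by rw [hvR]; positivity
    have hv0 : v ≠ 0 := by
      intro hcon
      rw [hcon] at hvpos
      simp at hvpos
    set r : Fin h → ℝ → ℝ :=
      fun i t => gaussianPDFReal (f d i) v t / gaussianPDFReal (f d' i) v t with hrdef
    have hrpos : ∀ i t, 0 < r i t := fun i t =>
      div_pos (gaussianPDFReal_pos _ _ _ hv0) (gaussianPDFReal_pos _ _ _ hv0)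
    have hrmeas : ∀ i, Measurable (r i) := fun i =>
      (measurable_gaussianPDFReal _ _).div (measurable_gaussianPDFReal _ _)
    have hgmeas : ∀ i, Measurable fun t => ENNReal.ofReal (r i t) :=
      fun i => (hrmeas i).ennreal_ofReal
    have hGmeas : Measurable fun x : Fin h → ℝ => ∏ i, ENNReal.ofReal (r i (x i)) :=
      Finset.measurable_prod _ fun i _ => (hgmeas i).comp (measurable_pi_apply i)
    have hMden : M d = (M d').withDensity fun x => ∏ i, ENNReal.ofReal (r i (x i)) := by
      rw [hM d, hM d']
      exact pi_withDensity_eq (fun i => gaussianReal (f d' i) v)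
        (fun i => gaussianReal (f d i) v) (fun i t => ENNReal.ofReal (r i t)) hgmeas
        fun i => gaussian_withDensity _ _ hv0
    have hsf : SigmaFinite (M d') := by rw [hM d']; infer_instance
    have hrn : (M d).rnDeriv (M d') =ᵐ[M d'] fun x => ∏ i, ENNReal.ofReal (r i (x i)) := by
      rw [hMden]
      exact Measure.rnDeriv_withDensity _ hGmeas
    have hpmeas : ∀ i : Fin h, Measurable fun x : Fin h → ℝ => (r i (x i)) ^ α := by
      intro i
      have h1 : Measurable fun x : Fin h → ℝ => r i (x i) :=
        (hrmeas i).comp (measurable_pi_apply i)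
      measurability
    have hint : ∫ x, (((M d).rnDeriv (M d') x).toReal) ^ α ∂(M d')
        = Real.exp (α * (α - 1) * (∑ i, (f d i - f d' i) ^ 2) / (2 * v)) := by
      have h1 : (fun x => (((M d).rnDeriv (M d') x).toReal) ^ α) =ᵐ[M d']
          fun x => ∏ i, (r i (x i)) ^ α := hrn.mono fun x hx => by
        simp only [hx]
        rw [ENNReal.toReal_prod]
        rw [show (∏ i, (ENNReal.ofReal (r i (x i))).toReal) = ∏ i, r i (x i) from
          Finset.prod_congr rfl fun i _ => ENNReal.toReal_ofReal (hrpos i (x i)).le]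
        exact (Real.finset_prod_rpow _ _ (fun i _ => (hrpos i (x i)).le) α).symm
      rw [integral_congr_ae h1,
        integral_eq_lintegral_of_nonneg_ae
          (Filter.Eventually.of_forall fun x =>
            Finset.prod_nonneg fun i _ => Real.rpow_nonneg (hrpos i (x i)).le α)
          (Finset.measurable_prod _ fun i _ => (hpmeas i)).aestronglyMeasurable]
      have h2 : ∀ x : Fin h → ℝ, ENNReal.ofReal (∏ i, (r i (x i)) ^ α)
          = ∏ i, ENNReal.ofReal ((r i (x i)) ^ α) := fun x =>
        ENNReal.ofReal_prod_of_nonneg fun i _ => Real.rpow_nonneg (hrpos i (x i)).le α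
      simp_rw [h2]
      rw [hM d', show (∫⁻ a : Fin h → ℝ, ∏ i, ENNReal.ofReal ((r i (a i)) ^ α)
            ∂Measure.pi fun i => gaussianReal (f d' i) v)
          = ∏ i, ∫⁻ t, ENNReal.ofReal ((r i t) ^ α) ∂gaussianReal (f d' i) v from
        lintegral_pi_prod _ (fun i t => ENNReal.ofReal ((r i t) ^ α)) (fun i => by
          have h1 : Measurable (r i) := hrmeas i
          measurability)]
      rw [show (∏ i, ∫⁻ t, ENNReal.ofReal ((r i t) ^ α) ∂gaussianReal (f d' i) v)
          = ∏ i, ENNReal.ofReal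
              (Real.exp (α * (α - 1) * (f d i - f d' i) ^ 2 / (2 * v))) from
        Finset.prod_congr rfl fun i _ => lintegral_ratio_rpow _ _ hv0 α]
      rw [← ENNReal.ofReal_prod_of_nonneg fun i _ => (Real.exp_pos _).le,
        ← Real.exp_sum, ENNReal.toReal_ofReal (Real.exp_pos _).le]
      congr 1
      rw [← Finset.sum_div, ← Finset.mul_sum]
    rw [renyiDiv, hint, Real.log_exp]
    have hS : (∑ i, (f d i - f d' i) ^ 2) ≤ Δ ^ 2 := by
      have h1 := hsens d d' hnb
      nlinarith [Real.sq_sqrt hSnn, Real.sqrt_nonneg (∑ j, (f d j - f d' j) ^ 2)]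
    rw [hvR]
    rw [show (α - 1)⁻¹ * (α * (α - 1) * (∑ i, (f d i - f d' i) ^ 2) / (2 * (σ * Δ) ^ 2))
        = α * (∑ i, (f d i - f d' i) ^ 2) / (2 * (σ * Δ) ^ 2) by
      field_simp]
    rw [show (1 / (2 * σ ^ 2) * α : ℝ) = α * Δ ^ 2 / (2 * (σ * Δ) ^ 2) by
      field_simp]
    gcongr
end

section
/- Let each marginal wᵢ in a set of one-way marginals have cᵢ cells, and allocate privacy budget ρᵢ = cᵢ^{2/3}/(Σⱼ cⱼ^{2/3}) · ρ_total to marginal wᵢ. Then the total expected ℓ1 noise error Σᵢ cᵢ/√(π·ρᵢ) equals (Σⱼ cⱼ^{2/3})^{3/2}/√(π·ρ_total), and this allocation minimizes Σᵢ cᵢ/√(π·ρᵢ) subject to Σᵢ ρᵢ = ρ_total and ρᵢ > 0. -/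
open Real

/-- The PrivSyn budget split `ρᵢ = cᵢ^{2/3}/(Σⱼ cⱼ^{2/3})·ρ_total` gives total expected
ℓ1 noise error `Σᵢ cᵢ/√(π·ρᵢ) = (Σⱼ cⱼ^{2/3})^{3/2}/√(π·ρ_total)`, and this allocation
minimizes `Σᵢ cᵢ/√(π·ρᵢ)` over all positive allocations summing to `ρ_total`. -/
theorem privsyn_budget_allocation_optimal
    (k : ℕ) (c : Fin k → ℝ) (hc : ∀ i, 0 < c i)
    (ρtot : ℝ) (hρtot : 0 < ρtot)
    (ρ : Fin k → ℝ)
    (hρ : ∀ i, ρ i = c i ^ ((2 : ℝ) / 3) / (∑ j, c j ^ ((2 : ℝ) / 3)) * ρtot) :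
    (∑ i, c i / Real.sqrt (π * ρ i) =
      (∑ j, c j ^ ((2 : ℝ) / 3)) ^ ((3 : ℝ) / 2) / Real.sqrt (π * ρtot)) ∧
    (∀ ρ' : Fin k → ℝ, (∀ i, 0 < ρ' i) → (∑ i, ρ' i) = ρtot →
      ∑ i, c i / Real.sqrt (π * ρ i) ≤ ∑ i, c i / Real.sqrt (π * ρ' i)) := by
  set S : ℝ := ∑ j, c j ^ ((2 : ℝ) / 3) with hS
  by_cases hk : k = 0
  · subst hk
    constructor
    · simp [hS, Real.zero_rpow (by norm_num : (3:ℝ)/2 ≠ 0)]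
    · intro ρ' _ _; simp
  have hSpos : 0 < S := by
    apply Finset.sum_pos (fun i _ => Real.rpow_pos_of_pos (hc i) _)
    exact ⟨⟨0, Nat.pos_of_ne_zero hk⟩, Finset.mem_univ _⟩
  have hπ : (0:ℝ) < π := Real.pi_pos
  have hterm : ∀ i, c i / Real.sqrt (π * ρ i)
      = c i ^ ((2:ℝ)/3) * (Real.sqrt S / (Real.sqrt π * Real.sqrt ρtot)) := by
    intro i
    have hci := hc i
    have h23 : (0:ℝ) < c i ^ ((2:ℝ)/3) := Real.rpow_pos_of_pos hci _
    have hsplit : c i = c i ^ ((2:ℝ)/3) * c i ^ ((1:ℝ)/3) := by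
      rw [← Real.rpow_add hci]; norm_num
    rw [hρ i, Real.sqrt_mul Real.pi_nonneg,
      Real.sqrt_mul (by positivity : (0:ℝ) ≤ c i ^ ((2:ℝ)/3) / S),
      Real.sqrt_div h23.le]
    have h13 : Real.sqrt (c i ^ ((2:ℝ)/3)) = c i ^ ((1:ℝ)/3) := by
      rw [Real.sqrt_eq_rpow, ← Real.rpow_mul hci.le]; norm_num
    rw [h13]
    have h13pos : (0:ℝ) < c i ^ ((1:ℝ)/3) := Real.rpow_pos_of_pos hci _
    have hSs : (0:ℝ) < Real.sqrt S := Real.sqrt_pos.2 hSpos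
    have hπs : (0:ℝ) < Real.sqrt π := Real.sqrt_pos.2 hπ
    have hρs : (0:ℝ) < Real.sqrt ρtot := Real.sqrt_pos.2 hρtot
    field_simp
    linear_combination hsplit
  have hS32 : S ^ ((3:ℝ)/2) = S * Real.sqrt S := by
    rw [show (3:ℝ)/2 = 1 + 1/2 by norm_num, Real.rpow_add hSpos, Real.rpow_one,
      Real.sqrt_eq_rpow]
  have hmain : ∑ i, c i / Real.sqrt (π * ρ i)
      = S ^ ((3:ℝ)/2) / Real.sqrt (π * ρtot) := by
    simp_rw [hterm]
    rw [← Finset.sum_mul, ← hS, hS32, Real.sqrt_mul Real.pi_nonneg]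
    ring
  refine ⟨hmain, ?_⟩
  intro ρ' hρ'pos hρ'sum
  rw [hmain]
  set T : ℝ := ∑ i, c i / Real.sqrt (ρ' i) with hT
  have hTpos : 0 < T := Finset.sum_pos
    (fun i _ => div_pos (hc i) (Real.sqrt_pos.2 (hρ'pos i)))
    ⟨⟨0, Nat.pos_of_ne_zero hk⟩, Finset.mem_univ _⟩
  have holder : S ≤ T ^ ((2:ℝ)/3) * ρtot ^ ((1:ℝ)/3) := by
    have hpq : Real.HolderConjugate ((3:ℝ)/2) 3 :=
      (Real.holderConjugate_iff_eq_conjExponent (by norm_num)).2 (by norm_num)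
    have h := Real.inner_le_Lp_mul_Lq Finset.univ
      (fun i => (c i / Real.sqrt (ρ' i)) ^ ((2:ℝ)/3))
      (fun i => (ρ' i) ^ ((1:ℝ)/3)) hpq
    have e1 : ∀ i : Fin k, (c i / Real.sqrt (ρ' i)) ^ ((2:ℝ)/3) * (ρ' i) ^ ((1:ℝ)/3)
        = c i ^ ((2:ℝ)/3) := by
      intro i
      have h1 : (c i / Real.sqrt (ρ' i)) ^ ((2:ℝ)/3)
          = c i ^ ((2:ℝ)/3) / (ρ' i) ^ ((1:ℝ)/3) := by
        rw [Real.div_rpow (hc i).le (Real.sqrt_nonneg _), Real.sqrt_eq_rpow,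
          ← Real.rpow_mul (hρ'pos i).le]
        norm_num
      rw [h1, div_mul_cancel₀]
      exact (Real.rpow_pos_of_pos (hρ'pos i) _).ne'
    have e2 : ∀ i : Fin k, |(c i / Real.sqrt (ρ' i)) ^ ((2:ℝ)/3)| ^ ((3:ℝ)/2)
        = c i / Real.sqrt (ρ' i) := by
      intro i
      have hxi : (0:ℝ) < c i / Real.sqrt (ρ' i) :=
        div_pos (hc i) (Real.sqrt_pos.2 (hρ'pos i))
      rw [abs_of_nonneg (Real.rpow_pos_of_pos hxi _).le, ← Real.rpow_mul hxi.le]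
      norm_num
    have e3 : ∀ i : Fin k, |(ρ' i) ^ ((1:ℝ)/3)| ^ (3:ℝ) = ρ' i := by
      intro i
      rw [abs_of_nonneg (Real.rpow_pos_of_pos (hρ'pos i) _).le,
        ← Real.rpow_mul (hρ'pos i).le]
      norm_num
    simp_rw [e1, e2, e3] at h
    rw [hρ'sum] at h
    calc S ≤ T ^ (1/((3:ℝ)/2)) * ρtot ^ (1/(3:ℝ)) := h
      _ = T ^ ((2:ℝ)/3) * ρtot ^ ((1:ℝ)/3) := by norm_num
  have key : S ^ ((3:ℝ)/2) ≤ T * Real.sqrt ρtot := by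
    have h1 := Real.rpow_le_rpow hSpos.le holder (by norm_num : (0:ℝ) ≤ (3:ℝ)/2)
    calc S ^ ((3:ℝ)/2) ≤ (T ^ ((2:ℝ)/3) * ρtot ^ ((1:ℝ)/3)) ^ ((3:ℝ)/2) := h1
      _ = T * Real.sqrt ρtot := by
        rw [Real.mul_rpow (Real.rpow_pos_of_pos hTpos _).le
            (Real.rpow_pos_of_pos hρtot _).le,
          ← Real.rpow_mul hTpos.le, ← Real.rpow_mul hρtot.le, Real.sqrt_eq_rpow]
        norm_num
  have hrhs : ∑ i, c i / Real.sqrt (π * ρ' i) = T / Real.sqrt π := by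
    rw [hT, Finset.sum_div]
    refine Finset.sum_congr rfl fun i _ => ?_
    rw [Real.sqrt_mul Real.pi_nonneg, div_div]
    ring_nf
  rw [hrhs, Real.sqrt_mul Real.pi_nonneg,
    div_le_div_iff₀ (by positivity) (by positivity)]
  calc S ^ ((3:ℝ)/2) * Real.sqrt π ≤ T * Real.sqrt ρtot * Real.sqrt π :=
        mul_le_mul_of_nonneg_right key (Real.sqrt_nonneg _)
    _ = T * (Real.sqrt π * Real.sqrt ρtot) := by ring
end
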